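/- Fix an integer d ≥ 2. For ε ∈ (0,1) set R(ε) = 2ε + 1/(d−1) and B(ε) = d·⌈1/√ε⌉, and define g(ε) = [ R(ε)/(1 + (d−1)·ε) ] / [ R(ε)·(1 − d/B(ε))·(1−ε)^{B(ε)−1} + (1/d − 1/B(ε))·(1−ε)^{B(ε)} ]. Then g(ε) tends to d/(2d−1) as ε tends to 0 from the right. -/

import Mathlib

open Filter

/-- The block length `B(ε) = d·⌈1/√ε⌉` used by the clairvoyant block policy. -/
noncomputable def hardnessB (d : ℕ) (ε : ℝ) : ℕ := d * ⌈1 / Real.sqrt ε⌉₊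

/-- With `R(ε) = 2ε + 1/(d-1)` and `B(ε) = d·⌈1/√ε⌉`, the ratio
`g(ε) = [R(ε)/(1+(d-1)ε)] / [R(ε)(1 - d/B(ε))(1-ε)^{B(ε)-1} + (1/d - 1/B(ε))(1-ε)^{B(ε)}]`
tends to `d/(2d-1)` as `ε → 0⁺`. -/
theorem hardness_ratio_tendsto (d : ℕ) (hd : 2 ≤ d) :
    Tendsto (fun ε : ℝ =>
        ((2 * ε + 1 / ((d : ℝ) - 1)) / (1 + ((d : ℝ) - 1) * ε)) /
          ((2 * ε + 1 / ((d : ℝ) - 1)) * (1 - (d : ℝ) / ((hardnessB d ε : ℕ) : ℝ)) *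
              (1 - ε) ^ (hardnessB d ε - 1) +
            (1 / (d : ℝ) - 1 / ((hardnessB d ε : ℕ) : ℝ)) * (1 - ε) ^ (hardnessB d ε)))
      (nhdsWithin (0 : ℝ) (Set.Ioi 0))
      (nhds ((d : ℝ) / (2 * (d : ℝ) - 1))) := by
  have hd1 : (1:ℝ) < (d:ℝ) := by
    have : (2:ℝ) ≤ (d:ℝ) := by exact_mod_cast hd
    linarith
  have hd0 : (0:ℝ) < (d:ℝ) := by linarith
  set c : ℝ := 1 / ((d : ℝ) - 1) with hc
  have hdm1 : (0:ℝ) < (d:ℝ) - 1 := by linarith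
  have hcpos : 0 < c := by rw [hc]; positivity
  -- eventually ε ∈ Ioo 0 1
  have hmem : ∀ᶠ ε in nhdsWithin (0:ℝ) (Set.Ioi 0), ε ∈ Set.Ioo (0:ℝ) 1 :=
    Ioo_mem_nhdsGT_of_mem ⟨le_refl 0, one_pos⟩
  -- basic facts about B for ε ∈ Ioo 0 1
  have hBfacts : ∀ ε ∈ Set.Ioo (0:ℝ) 1,
      0 < ((hardnessB d ε : ℕ) : ℝ) ∧
      (d : ℝ) / ((hardnessB d ε : ℕ) : ℝ) ≤ Real.sqrt ε ∧
      ((hardnessB d ε : ℕ) : ℝ) * ε ≤ (d:ℝ) * (Real.sqrt ε + ε) := by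
    intro ε hε
    obtain ⟨hε0, hε1⟩ := hε
    have hs : 0 < Real.sqrt ε := Real.sqrt_pos.mpr hε0
    have hinv : 0 < 1 / Real.sqrt ε := by positivity
    have hceil1 : 1 ≤ ⌈1 / Real.sqrt ε⌉₊ := Nat.one_le_ceil_iff.mpr hinv
    have hceilge : 1 / Real.sqrt ε ≤ (⌈1 / Real.sqrt ε⌉₊ : ℝ) := Nat.le_ceil _
    have hceille : (⌈1 / Real.sqrt ε⌉₊ : ℝ) < 1 / Real.sqrt ε + 1 :=
      Nat.ceil_lt_add_one (le_of_lt hinv)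
    have hBval : ((hardnessB d ε : ℕ) : ℝ) = (d:ℝ) * (⌈1 / Real.sqrt ε⌉₊ : ℝ) := by
      simp [hardnessB]
    have hBpos : 0 < ((hardnessB d ε : ℕ) : ℝ) := by
      rw [hBval]
      have : (1:ℝ) ≤ (⌈1 / Real.sqrt ε⌉₊ : ℝ) := by exact_mod_cast hceil1
      nlinarith
    refine ⟨hBpos, ?_, ?_⟩
    · rw [div_le_iff₀ hBpos, hBval]
      have : 1 / Real.sqrt ε * Real.sqrt ε = 1 := by
        field_simp
      nlinarith [mul_le_mul_of_nonneg_right hceilge (le_of_lt hs)]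
    · rw [hBval]
      have h1 : ((hardnessB d ε : ℕ) : ℝ) * ε ≤ (d:ℝ) * (1 / Real.sqrt ε + 1) * ε := by
        rw [hBval]
        have h := mul_le_mul_of_nonneg_left
          (mul_le_mul_of_nonneg_right (le_of_lt hceille) (le_of_lt hε0)) (le_of_lt hd0)
        rw [mul_assoc, mul_assoc]
        exact h
      have h2 : (d:ℝ) * (1 / Real.sqrt ε + 1) * ε = (d:ℝ) * (ε / Real.sqrt ε + ε) := by
        ring
      have h3 : ε / Real.sqrt ε = Real.sqrt ε := Real.div_sqrt
      rw [← hBval]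
      calc ((hardnessB d ε : ℕ) : ℝ) * ε ≤ (d:ℝ) * (1 / Real.sqrt ε + 1) * ε := h1
        _ = (d:ℝ) * (ε / Real.sqrt ε + ε) := h2
        _ = (d:ℝ) * (Real.sqrt ε + ε) := by rw [h3]
  -- sqrt tendsto
  have hsqrt : Tendsto (fun ε : ℝ => Real.sqrt ε) (nhdsWithin 0 (Set.Ioi 0)) (nhds 0) :=
    (Real.continuous_sqrt.tendsto' 0 0 Real.sqrt_zero).mono_left nhdsWithin_le_nhds
  have hid : Tendsto (fun ε : ℝ => ε) (nhdsWithin 0 (Set.Ioi 0)) (nhds 0) :=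
    tendsto_id.mono_left nhdsWithin_le_nhds
  -- f1 := d/B → 0
  have hf1 : Tendsto (fun ε : ℝ => (d:ℝ) / ((hardnessB d ε : ℕ) : ℝ))
      (nhdsWithin 0 (Set.Ioi 0)) (nhds 0) := by
    refine tendsto_of_tendsto_of_tendsto_of_le_of_le' tendsto_const_nhds hsqrt
      (hmem.mono fun ε hε => ?_) (hmem.mono fun ε hε => (hBfacts ε hε).2.1)
    exact div_nonneg (le_of_lt hd0) (le_of_lt (hBfacts ε hε).1)
  -- lower bound function L ε = 1 - d*(√ε+ε) → 1
  have hL : Tendsto (fun ε : ℝ => 1 - (d:ℝ) * (Real.sqrt ε + ε))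
      (nhdsWithin 0 (Set.Ioi 0)) (nhds 1) := by
    have := ((hsqrt.add hid).const_mul (d:ℝ)).const_sub 1
    simpa using this
  -- generic power bound
  have hpow : ∀ ε ∈ Set.Ioo (0:ℝ) 1, ∀ n : ℕ, (n:ℝ) ≤ ((hardnessB d ε : ℕ) : ℝ) →
      1 - (d:ℝ) * (Real.sqrt ε + ε) ≤ (1 - ε) ^ n ∧ (1 - ε) ^ n ≤ 1 := by
    intro ε hε n hn
    obtain ⟨hε0, hε1⟩ := hε
    constructor
    · have hb := one_add_mul_le_pow (a := -ε) (by linarith) n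
      have hBe := (hBfacts ε ⟨hε0, hε1⟩).2.2
      have : (n:ℝ) * ε ≤ (d:ℝ) * (Real.sqrt ε + ε) := by
        calc (n:ℝ) * ε ≤ ((hardnessB d ε : ℕ) : ℝ) * ε := by nlinarith
          _ ≤ _ := hBe
      have hb' : 1 - (n:ℝ) * ε ≤ (1 - ε) ^ n := by
        simpa [sub_eq_add_neg, mul_neg] using hb
      linarith
    · exact pow_le_one₀ (by linarith) (by linarith)
  -- f3 := (1-ε)^(B-1) → 1 and f2 := (1-ε)^B → 1
  have hpowtend : ∀ k : ℕ, Tendsto (fun ε : ℝ => (1 - ε) ^ (hardnessB d ε - k))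
      (nhdsWithin 0 (Set.Ioi 0)) (nhds 1) := by
    intro k
    refine tendsto_of_tendsto_of_tendsto_of_le_of_le' hL tendsto_const_nhds
      (hmem.mono fun ε hε => ?_) (hmem.mono fun ε hε => ?_)
    · exact (hpow ε hε _ (by exact_mod_cast Nat.sub_le _ _)).1
    · exact (hpow ε hε _ (by exact_mod_cast Nat.sub_le _ _)).2
  have hf3 := hpowtend 1
  have hf2 : Tendsto (fun ε : ℝ => (1 - ε) ^ (hardnessB d ε))
      (nhdsWithin 0 (Set.Ioi 0)) (nhds 1) := by
    have := hpowtend 0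
    simpa using this
  -- rewrite 1/B as (d/B)/d
  have hrw : ∀ ε : ℝ, (1 : ℝ) / ((hardnessB d ε : ℕ) : ℝ) =
      ((d:ℝ) / ((hardnessB d ε : ℕ) : ℝ)) / (d:ℝ) := by
    intro ε
    rw [div_div, mul_comm, ← div_div, div_self (ne_of_gt hd0)]
  -- numerator
  have hnum : Tendsto (fun ε : ℝ => (2 * ε + c) / (1 + ((d:ℝ) - 1) * ε))
      (nhdsWithin 0 (Set.Ioi 0)) (nhds c) := by
    have h1 : Tendsto (fun ε : ℝ => 2 * ε + c) (nhdsWithin 0 (Set.Ioi 0)) (nhds c) := by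
      have := (hid.const_mul 2).add_const c
      simpa using this
    have h2 : Tendsto (fun ε : ℝ => 1 + ((d:ℝ) - 1) * ε) (nhdsWithin 0 (Set.Ioi 0)) (nhds 1) := by
      have := (hid.const_mul ((d:ℝ) - 1)).const_add 1
      simpa using this
    have := h1.div h2 one_ne_zero
    simp only [div_one] at this
    exact this
  -- denominator
  have h2ec : Tendsto (fun ε : ℝ => 2 * ε + c) (nhdsWithin 0 (Set.Ioi 0)) (nhds c) := by
    have := (hid.const_mul 2).add_const c
    simpa using this
  have hden : Tendsto (fun ε : ℝ =>
      (2 * ε + c) * (1 - (d:ℝ) / ((hardnessB d ε : ℕ) : ℝ)) * (1 - ε) ^ (hardnessB d ε - 1) +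
        (1 / (d:ℝ) - 1 / ((hardnessB d ε : ℕ) : ℝ)) * (1 - ε) ^ (hardnessB d ε))
      (nhdsWithin 0 (Set.Ioi 0)) (nhds (c + 1 / (d:ℝ))) := by
    have ht1 : Tendsto (fun ε : ℝ => (2 * ε + c) * (1 - (d:ℝ) / ((hardnessB d ε : ℕ) : ℝ)) *
        (1 - ε) ^ (hardnessB d ε - 1)) (nhdsWithin 0 (Set.Ioi 0)) (nhds c) := by
      have := (h2ec.mul (hf1.const_sub 1)).mul hf3
      simpa using this
    have ht2 : Tendsto (fun ε : ℝ => (1 / (d:ℝ) - 1 / ((hardnessB d ε : ℕ) : ℝ)) *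
        (1 - ε) ^ (hardnessB d ε)) (nhdsWithin 0 (Set.Ioi 0)) (nhds (1 / (d:ℝ))) := by
      have hf1d : Tendsto (fun ε : ℝ => 1 / (d:ℝ) - 1 / ((hardnessB d ε : ℕ) : ℝ))
          (nhdsWithin 0 (Set.Ioi 0)) (nhds (1 / (d:ℝ))) := by
        have := (hf1.div_const (d:ℝ)).const_sub (1 / (d:ℝ))
        simp only [zero_div, sub_zero] at this
        refine this.congr fun ε => ?_
        rw [hrw ε]
      have := hf1d.mul hf2
      simpa using this
    have := ht1.add ht2
    simpa using this
  have hdenne : c + 1 / (d:ℝ) ≠ 0 := by positivity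
  have := hnum.div hden hdenne
  have hval : c / (c + 1 / (d:ℝ)) = (d:ℝ) / (2 * (d:ℝ) - 1) := by
    have h1 : (d:ℝ) - 1 ≠ 0 := by linarith
    have h2 : 2 * (d:ℝ) - 1 ≠ 0 := by linarith
    have h3 : (d:ℝ) ≠ 0 := ne_of_gt hd0
    rw [hc]
    field_simp
    rw [show (d:ℝ) + ((d:ℝ) - 1) = (d:ℝ) * 2 - 1 by ring, div_self (by linarith)]
  rw [← hval]
  exact this
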